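/- Let F be a field, Γ an additive abelian group, ε a skew-symmetric bicharacter of Γ, A a Γ-graded associative unital ε-commutative F-algebra, and D a set of homogeneous color derivations of A such that A is graded D-simple. Call a function χ : D → F a root of A if there exists a nonzero homogeneous u ∈ A with ∂(u) = χ(∂)·u for all ∂ ∈ D. Then every root vanishes on all elements of D of nonzero degree, and the set of roots is closed under addition and negation: if χ and ψ are roots, then so are χ+ψ and −χ. In particular the roots form an additive group of F-valued functions on D. -/

import Mathlib

/-- `d` is a homogeneous color derivation of degree `lam` of the `Γ`-graded algebra `A`
(with grading `𝒜`) relative to the bicharacter `ε`. -/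
def IsHomColorDer {F : Type*} [Field F] {Γ : Type*} [AddCommGroup Γ]
    {A : Type*} [Ring A] [Algebra F A]
    (ε : Γ → Γ → F) (𝒜 : Γ → Submodule F A) (lam : Γ) (d : Module.End F A) : Prop :=
  (∀ μ : Γ, ∀ a ∈ 𝒜 μ, d a ∈ 𝒜 (lam + μ)) ∧
  (∀ (l m : Γ) (a b : A), a ∈ 𝒜 l → b ∈ 𝒜 m →
    d (a * b) = d a * b + ε lam l • (a * d b))

/-- `A` is graded `D`-simple: the only `Γ`-graded two-sided ideals of `A` stable under
all derivations in `D` are `0` and `A`. -/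
def IsGradedDSimple {F : Type*} [Field F] {Γ : Type*} [AddCommGroup Γ] [DecidableEq Γ]
    {A : Type*} [Ring A] [Algebra F A]
    (𝒜 : Γ → Submodule F A) [GradedAlgebra 𝒜] (D : Set (Module.End F A)) : Prop :=
  ∀ I : Submodule F A,
    (∀ (a x : A), x ∈ I → a * x ∈ I ∧ x * a ∈ I) →
    (∀ x ∈ I, ∀ γ : Γ, (DirectSum.decompose 𝒜 x γ : A) ∈ I) →
    (∀ d ∈ D, ∀ x ∈ I, d x ∈ I) →
    I = ⊥ ∨ I = ⊤

/-- `χ` is a root of `A` with respect to `D`: some nonzero homogeneous `u ∈ A`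
satisfies `∂(u) = χ(∂)·u` for all `∂ ∈ D`. -/
def IsRoot {F : Type*} [Field F] {Γ : Type*} [AddCommGroup Γ]
    {A : Type*} [Ring A] [Algebra F A]
    (𝒜 : Γ → Submodule F A) (D : Set (Module.End F A))
    (χ : Module.End F A → F) : Prop :=
  ∃ u : A, u ≠ 0 ∧ (∃ γ : Γ, u ∈ 𝒜 γ) ∧ ∀ d ∈ D, d u = χ d • u

/-- For a graded `D`-simple `ε`-commutative `Γ`-graded unital algebra,
every root vanishes on all derivations of nonzero degree, and roots are closed under
addition and negation; in particular they form an additive group of `F`-valued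
functions. -/
theorem roots_form_group
    {F : Type*} [Field F] {Γ : Type*} [AddCommGroup Γ] [DecidableEq Γ]
    {A : Type*} [Ring A] [Algebra F A] [Nontrivial A]
    (ε : Γ → Γ → F)
    (hskew : ∀ l m : Γ, ε l m * ε m l = 1)
    (hmul : ∀ l m n : Γ, ε l (m + n) = ε l m * ε l n)
    (𝒜 : Γ → Submodule F A) [GradedAlgebra 𝒜]
    (hcomm : ∀ (l m : Γ) (a b : A), a ∈ 𝒜 l → b ∈ 𝒜 m → a * b = ε l m • (b * a))
    (D : Set (Module.End F A)) (deg : Module.End F A → Γ)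
    (hD : ∀ d ∈ D, IsHomColorDer ε 𝒜 (deg d) d)
    (hsimple : IsGradedDSimple 𝒜 D) :
    (∀ χ : Module.End F A → F, IsRoot 𝒜 D χ → ∀ d ∈ D, deg d ≠ 0 → χ d = 0) ∧
    (∀ χ ψ : Module.End F A → F, IsRoot 𝒜 D χ → IsRoot 𝒜 D ψ →
      IsRoot 𝒜 D (χ + ψ)) ∧
    (∀ χ : Module.End F A → F, IsRoot 𝒜 D χ → IsRoot 𝒜 D (-χ)) ∧
    (∃ H : AddSubgroup (Module.End F A → F),
      (H : Set (Module.End F A → F)) = {χ | IsRoot 𝒜 D χ}) := by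
  classical
  -- basic facts about ε
  have hεne : ∀ l m : Γ, ε l m ≠ 0 := fun l m => left_ne_zero_of_mul_eq_one (hskew l m)
  have hεr0 : ∀ l : Γ, ε l 0 = 1 := by
    intro l
    have h := hmul l 0 0
    rw [add_zero] at h
    have h2 : ε l 0 * 1 = ε l 0 * ε l 0 := by rw [mul_one]; exact h
    exact (mul_left_cancel₀ (hεne l 0) h2).symm
  have hεl0 : ∀ m : Γ, ε 0 m = 1 := by
    intro m
    have h := hskew 0 m
    rw [hεr0 m, mul_one] at h
    exact h
  -- a nonzero element cannot be homogeneous of two distinct degrees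
  have htwo : ∀ (l m : Γ) (x : A), x ∈ 𝒜 l → x ∈ 𝒜 m → l ≠ m → x = 0 := by
    intro l m x hl hm hne
    have h1 : (DirectSum.decompose 𝒜 x m : A) = x := DirectSum.decompose_of_mem_same 𝒜 hm
    have h2 : (DirectSum.decompose 𝒜 x m : A) = 0 := DirectSum.decompose_of_mem_ne 𝒜 hl hne
    rw [h1] at h2; exact h2
  -- every derivation in D kills 1
  have hd1 : ∀ d ∈ D, d (1 : A) = 0 := by
    intro d hd
    have h := (hD d hd).2 0 0 1 1 (SetLike.one_mem_graded 𝒜) (SetLike.one_mem_graded 𝒜)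
    rw [mul_one, one_mul, mul_one, hεr0, one_smul] at h
    exact (left_eq_add.mp h)
  -- Part 1 : roots vanish on derivations of nonzero degree
  have part1 : ∀ χ : Module.End F A → F, IsRoot 𝒜 D χ → ∀ d ∈ D, deg d ≠ 0 → χ d = 0 := by
    rintro χ ⟨u, hu0, ⟨γ, hγ⟩, hroot⟩ d hd hdeg
    by_contra hne
    have h1 : d u ∈ 𝒜 (deg d + γ) := (hD d hd).1 γ u hγ
    rw [hroot d hd] at h1
    have h2 : χ d • u ∈ 𝒜 γ := Submodule.smul_mem _ _ hγ
    have h3 : χ d • u = 0 :=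
      htwo _ _ _ h1 h2 (fun h => hdeg (by rwa [add_eq_right] at h))
    rcases smul_eq_zero.mp h3 with h | h
    · exact hne h
    · exact hu0 h
  -- the right annihilator of a root vector is trivial
  have ann : ∀ (χ : Module.End F A → F) (u : A) (γ : Γ), u ≠ 0 → u ∈ 𝒜 γ →
      (∀ d ∈ D, d u = χ d • u) → ∀ a : A, u * a = 0 → a = 0 := by
    intro χ u γ hu0 hγ hroot
    set J : Submodule F A := LinearMap.ker (LinearMap.mulLeft F u) with hJdef
    have hmem : ∀ a : A, a ∈ J ↔ u * a = 0 := by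
      intro a
      simp [hJdef, LinearMap.mem_ker]
    have c1 : ∀ (a x : A), x ∈ J → a * x ∈ J ∧ x * a ∈ J := by
      intro a x hx
      rw [hmem] at hx
      constructor
      · rw [hmem]
        induction a using DirectSum.Decomposition.inductionOn 𝒜 with
        | zero => simp
        | homogeneous m =>
          rw [← mul_assoc, hcomm γ _ u m hγ m.2, smul_mul_assoc, mul_assoc, hx,
            mul_zero, smul_zero]
        | add a b ha hb => rw [add_mul, mul_add, ha, hb, add_zero]
      · rw [hmem, ← mul_assoc, hx, zero_mul]
    have c2 : ∀ x ∈ J, ∀ μ : Γ, (DirectSum.decompose 𝒜 x μ : A) ∈ J := by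
      intro x hx μ
      rw [hmem] at hx
      rw [hmem]
      have h := DirectSum.coe_decompose_mul_add_of_left_mem 𝒜 (b := x) (j := μ) hγ
      rw [hx] at h
      simpa using h.symm
    -- stability of J under a derivation, homogeneous case first
    have c3hom : ∀ d ∈ D, ∀ (μ : Γ) (y : A), y ∈ 𝒜 μ → u * y = 0 → u * d y = 0 := by
      intro d hd μ y hy huy
      have h := (hD d hd).2 γ μ u y hγ hy
      rw [huy, map_zero, hroot d hd, smul_mul_assoc, huy, smul_zero, zero_add] at h
      rcases smul_eq_zero.mp h.symm with h' | h'
      · exact absurd h' (hεne _ _)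
      · exact h'
    have c3 : ∀ d ∈ D, ∀ x ∈ J, d x ∈ J := by
      intro d hd x hx
      rw [hmem]
      have hx' := DirectSum.sum_support_decompose 𝒜 x
      calc u * d x = u * d (∑ μ ∈ (DirectSum.decompose 𝒜 x).support,
              (DirectSum.decompose 𝒜 x μ : A)) := by rw [hx']
        _ = ∑ μ ∈ (DirectSum.decompose 𝒜 x).support,
              u * d (DirectSum.decompose 𝒜 x μ : A) := by rw [map_sum, Finset.mul_sum]
        _ = 0 := by
            refine Finset.sum_eq_zero fun μ _ => ?_
            exact c3hom d hd μ _ (SetLike.coe_mem _) ((hmem _).mp (c2 x hx μ))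
    rcases hsimple J c1 c2 c3 with h | h
    · intro a ha
      have : a ∈ J := (hmem a).mpr ha
      rw [h] at this
      simpa using this
    · exfalso
      have h1 : (1 : A) ∈ J := by rw [h]; trivial
      rw [hmem, mul_one] at h1
      exact hu0 h1
  -- a homogeneous root vector has a right inverse
  have hinv : ∀ (χ : Module.End F A → F) (u : A) (γ : Γ), u ≠ 0 → u ∈ 𝒜 γ →
      (∀ d ∈ D, d u = χ d • u) → ∃ w : A, u * w = 1 := by
    intro χ u γ hu0 hγ hroot
    set I : Submodule F A := LinearMap.range (LinearMap.mulLeft F u) with hIdef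
    have hmem : ∀ x : A, x ∈ I ↔ ∃ b : A, u * b = x := by
      intro x
      simp [hIdef, LinearMap.mem_range]
    have c1 : ∀ (a x : A), x ∈ I → a * x ∈ I ∧ x * a ∈ I := by
      intro a x hx
      rw [hmem] at hx
      obtain ⟨b, hb⟩ := hx
      constructor
      · rw [hmem]
        subst hb
        induction a using DirectSum.Decomposition.inductionOn 𝒜 with
        | zero => exact ⟨0, by simp⟩
        | homogeneous m =>
          rename_i i
          refine ⟨ε i γ • ((m : A) * b), ?_⟩
          rw [mul_smul_comm, ← mul_assoc, ← smul_mul_assoc, ← hcomm _ γ _ u m.2 hγ,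
            mul_assoc]
        | add a a' ha ha' =>
          obtain ⟨c, hc⟩ := ha
          obtain ⟨c', hc'⟩ := ha'
          exact ⟨c + c', by rw [mul_add, hc, hc', add_mul]⟩
      · exact (hmem _).mpr ⟨b * a, by rw [← mul_assoc, hb]⟩
    have c2 : ∀ x ∈ I, ∀ μ : Γ, (DirectSum.decompose 𝒜 x μ : A) ∈ I := by
      intro x hx μ
      obtain ⟨b, hb⟩ := (hmem x).mp hx
      rw [hmem]
      refine ⟨(DirectSum.decompose 𝒜 b (-γ + μ) : A), ?_⟩
      have h := DirectSum.coe_decompose_mul_add_of_left_mem 𝒜 (b := b) (j := -γ + μ) hγ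
      rw [hb, add_neg_cancel_left] at h
      exact h.symm
    have c3 : ∀ d ∈ D, ∀ x ∈ I, d x ∈ I := by
      intro d hd x hx
      obtain ⟨b, hb⟩ := (hmem x).mp hx
      have key : ∀ (μ : Γ) (y : A), y ∈ 𝒜 μ → d (u * y) ∈ I := by
        intro μ y hy
        have h := (hD d hd).2 γ μ u y hγ hy
        rw [hroot d hd, smul_mul_assoc] at h
        rw [h]
        refine Submodule.add_mem _ ?_ ?_
        · exact Submodule.smul_mem _ _ ((hmem _).mpr ⟨y, rfl⟩)
        · exact Submodule.smul_mem _ _ ((hmem _).mpr ⟨d y, rfl⟩)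
      subst hb
      have hb' := DirectSum.sum_support_decompose 𝒜 b
      have : d (u * b) = ∑ μ ∈ (DirectSum.decompose 𝒜 b).support,
          d (u * (DirectSum.decompose 𝒜 b μ : A)) := by
        conv_lhs => rw [← hb', Finset.mul_sum, map_sum]
      rw [this]
      exact Submodule.sum_mem _ fun μ _ => key μ _ (SetLike.coe_mem _)
    rcases hsimple I c1 c2 c3 with h | h
    · exfalso
      have hu : u ∈ I := (hmem u).mpr ⟨1, mul_one u⟩
      rw [h] at hu
      exact hu0 (by simpa using hu)
    · have h1 : (1 : A) ∈ I := by rw [h]; trivial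
      exact (hmem 1).mp h1
  -- Part 3 : negation
  have part3 : ∀ χ : Module.End F A → F, IsRoot 𝒜 D χ → IsRoot 𝒜 D (-χ) := by
    intro χ hχ
    obtain ⟨u, hu0, ⟨γ, hγ⟩, hroot⟩ := hχ
    obtain ⟨w, hw⟩ := hinv χ u γ hu0 hγ hroot
    set w' : A := (DirectSum.decompose 𝒜 w (-γ) : A) with hw'def
    have hw'mem : w' ∈ 𝒜 (-γ) := SetLike.coe_mem _
    have huw' : u * w' = 1 := by
      have h := DirectSum.coe_decompose_mul_add_of_left_mem 𝒜 (b := w) (j := -γ) hγ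
      rw [hw, add_neg_cancel] at h
      rw [hw'def, ← h, DirectSum.decompose_of_mem_same 𝒜 (SetLike.one_mem_graded 𝒜)]
    have hw'0 : w' ≠ 0 := by
      intro h
      rw [h, mul_zero] at huw'
      exact one_ne_zero huw'.symm
    refine ⟨w', hw'0, ⟨-γ, hw'mem⟩, ?_⟩
    intro d hd
    have h := (hD d hd).2 γ (-γ) u w' hγ hw'mem
    rw [huw', hd1 d hd, hroot d hd, smul_mul_assoc, huw'] at h
    -- h : 0 = χ d • 1 + ε (deg d) γ • (u * d w')
    have h2 : u * (ε (deg d) γ • d w' + χ d • w') = 0 := by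
      rw [mul_add, mul_smul_comm, mul_smul_comm, huw']
      have := h.symm
      rw [add_comm] at this
      linear_combination (norm := module) this
    have h3 : ε (deg d) γ • d w' + χ d • w' = 0 := ann χ u γ hu0 hγ hroot _ h2
    have h4 : ε (deg d) γ • d w' = -(χ d) • w' := by
      rw [neg_smul, eq_neg_iff_add_eq_zero]
      exact h3
    by_cases h0 : deg d = 0
    · rw [h0, hεl0, one_smul] at h4
      rw [h4, Pi.neg_apply]
    · have hχ0 : χ d = 0 := part1 χ ⟨u, hu0, ⟨γ, hγ⟩, hroot⟩ d hd h0
      rw [hχ0, neg_zero, zero_smul] at h4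
      rcases smul_eq_zero.mp h4 with h' | h'
      · exact absurd h' (hεne _ _)
      · rw [h', Pi.neg_apply, hχ0, neg_zero, zero_smul]
  -- Part 2 : addition
  have part2 : ∀ χ ψ : Module.End F A → F, IsRoot 𝒜 D χ → IsRoot 𝒜 D ψ →
      IsRoot 𝒜 D (χ + ψ) := by
    intro χ ψ hχ hψ
    obtain ⟨u, hu0, ⟨γ, hγ⟩, hru⟩ := hχ
    obtain ⟨v, hv0, ⟨δ, hδ⟩, hrv⟩ := hψ
    refine ⟨u * v, ?_, ⟨γ + δ, SetLike.mul_mem_graded hγ hδ⟩, ?_⟩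
    · intro h
      exact hv0 (ann χ u γ hu0 hγ hru v h)
    · intro d hd
      have h := (hD d hd).2 γ δ u v hγ hδ
      rw [hru d hd, hrv d hd, smul_mul_assoc, mul_smul_comm, smul_smul] at h
      have hkey : ε (deg d) γ * ψ d = ψ d := by
        by_cases h0 : deg d = 0
        · rw [h0, hεl0, one_mul]
        · rw [part1 ψ ⟨v, hv0, ⟨δ, hδ⟩, hrv⟩ d hd h0, mul_zero]
      rw [hkey] at h
      rw [h, Pi.add_apply, add_smul]
  -- assemble
  refine ⟨part1, part2, part3, ?_⟩
  refine ⟨{ carrier := {χ | IsRoot 𝒜 D χ}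
            zero_mem' := ?_
            add_mem' := fun ha hb => part2 _ _ ha hb
            neg_mem' := fun ha => part3 _ ha }, rfl⟩
  exact ⟨1, one_ne_zero, ⟨0, SetLike.one_mem_graded 𝒜⟩,
    fun d hd => by rw [hd1 d hd, Pi.zero_apply, zero_smul]⟩
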